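/- Let p be a prime with gcd(3,p) = 1 and p^m ≡ 1 (mod 3), and let δ ∈ R^t be a unit that is a cube in R^t, say δ = δ̃³ with δ̃ ∈ R^t. Then δ̃ is a unit of R^t, and there exist distinct elements b, c ∈ F \ {0, 1} such that x^{3p^s} − δ = (x^{p^s} − δ̃)(x^{p^s} − bδ̃)(x^{p^s} − cδ̃) in R^t[x] and there is a ring isomorphism R^{t,3}_δ = R^t[x]/⟨x^{3p^s} − δ⟩ ≅ R^t[x]/⟨x^{p^s} − δ̃⟩ × R^t[x]/⟨x^{p^s} − bδ̃⟩ × R^t[x]/⟨x^{p^s} − cδ̃⟩. -/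

import Mathlib

open Polynomial

/-- The finite chain ring `R^t = 𝔽_{p^m}[u]/⟨u^t⟩`. -/
abbrev Rt (p m t : ℕ) [Fact p.Prime] : Type _ :=
  Polynomial (GaloisField p m) ⧸ Ideal.span {(X : Polynomial (GaloisField p m)) ^ t}

/-- The canonical projection `𝔽_{p^m}[u] → R^t`. -/
noncomputable def mkRt (p m t : ℕ) [Fact p.Prime] :
    Polynomial (GaloisField p m) →+* Rt p m t :=
  Ideal.Quotient.mk _

/-- The element `u ∈ R^t`. -/
noncomputable def uRt (p m t : ℕ) [Fact p.Prime] : Rt p m t := mkRt p m t X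

/-- The canonical embedding `𝔽_{p^m} → R^t`. -/
noncomputable def κ (p m t : ℕ) [Fact p.Prime] : GaloisField p m →+* Rt p m t :=
  (mkRt p m t).comp (C : GaloisField p m →+* Polynomial (GaloisField p m))

instance Qr.isTwoSided (p m t : ℕ) [Fact p.Prime] (N : ℕ) (δ : Rt p m t) :
    (Ideal.span {(X : Polynomial (Rt p m t)) ^ N - C δ}).IsTwoSided :=
  Ideal.IsTwoSided.mk (fun b ha => mul_comm b _ ▸ Ideal.mul_mem_left _ _ ha)

/-- The quotient ring `R^t[x]/⟨x^N − δ⟩`. -/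
abbrev Qr (p m t : ℕ) [Fact p.Prime] (N : ℕ) (δ : Rt p m t) : Type _ :=
  Polynomial (Rt p m t) ⧸ Ideal.span {(X : Polynomial (Rt p m t)) ^ N - C δ}

/-- The canonical projection `R^t[x] → R^t[x]/⟨x^N − δ⟩`. -/
noncomputable def mkQr (p m t : ℕ) [Fact p.Prime] (N : ℕ) (δ : Rt p m t) :
    Polynomial (Rt p m t) →+* Qr p m t N δ :=
  Ideal.Quotient.mk _

lemma cube_factor {A : Type*} [CommRing A] (Y a B C' : A)
    (h1 : 1 + B + C' = 0) (h2 : B * C' = 1) :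
    Y ^ 3 - a ^ 3 = (Y - a) * (Y - B * a) * (Y - C' * a) := by
  have hC : C' = -(1 + B) := by linear_combination h1
  subst hC
  linear_combination (a ^ 3 - a ^ 2 * Y) * h2

lemma coprime_aux {A : Type*} [CommRing A] (n : ℕ) (a1 a2 : A) (h : IsUnit (a2 - a1)) :
    IsCoprime ((X : Polynomial A) ^ n - C a1) (X ^ n - C a2) := by
  obtain ⟨w, hw⟩ := h
  refine ⟨C (↑w⁻¹ : A), -C (↑w⁻¹ : A), ?_⟩
  have h1 : (↑w⁻¹ : A) * (a2 - a1) = 1 := by rw [← hw, Units.inv_mul]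
  calc C (↑w⁻¹ : A) * (X ^ n - C a1) + -C (↑w⁻¹ : A) * (X ^ n - C a2)
      = C ((↑w⁻¹ : A) * (a2 - a1)) := by push_cast [map_mul, map_sub]; ring
    _ = 1 := by rw [h1, map_one]

lemma exists_cube_root_unity (q : ℕ) (F : Type*) [Field F] [Fintype F] [DecidableEq F]
    (hc : Fintype.card F = q) (hq : q % 3 = 1) :
    ∃ ω : F, ω ^ 3 = 1 ∧ ω ≠ 1 := by
  have hcard : Fintype.card Fˣ = q - 1 := by rw [Fintype.card_units, hc]
  have h3 : 3 ∣ Fintype.card Fˣ := by omega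
  obtain ⟨g, hg⟩ := IsCyclic.exists_generator (α := Fˣ)
  have hog : orderOf g = Fintype.card Fˣ := by
    rw [orderOf_eq_card_of_forall_mem_zpowers hg, Nat.card_eq_fintype_card]
  have hne : Fintype.card Fˣ ≠ 0 := Fintype.card_ne_zero
  set ω := g ^ (Fintype.card Fˣ / 3) with hω
  have hoω : orderOf ω = 3 := by
    rw [hω, orderOf_pow, hog, Nat.gcd_eq_right (Nat.div_dvd_of_dvd h3),
      Nat.div_div_self h3 hne]
  refine ⟨(ω : F), ?_, ?_⟩
  · have h := pow_orderOf_eq_one ω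
    rw [hoω] at h
    have := congrArg (Units.val) h
    push_cast at this
    exact this
  · intro h
    have : ω = 1 := Units.ext h
    rw [this] at hoω; simp at hoω

lemma crt_three {A : Type*} [CommRing A] (N n : ℕ) (d a1 a2 a3 : A)
    (hfac : (X : Polynomial A) ^ N - C d =
      (X ^ n - C a1) * (X ^ n - C a2) * (X ^ n - C a3))
    (cop12 : IsCoprime ((X : Polynomial A) ^ n - C a1) (X ^ n - C a2))
    (cop13 : IsCoprime ((X : Polynomial A) ^ n - C a1) (X ^ n - C a3))
    (cop23 : IsCoprime ((X : Polynomial A) ^ n - C a2) (X ^ n - C a3)) :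
    Nonempty ((Polynomial A ⧸ Ideal.span {(X : Polynomial A) ^ N - C d}) ≃+*
      (Polynomial A ⧸ Ideal.span {(X : Polynomial A) ^ n - C a1}) ×
      (Polynomial A ⧸ Ideal.span {(X : Polynomial A) ^ n - C a2}) ×
      (Polynomial A ⧸ Ideal.span {(X : Polynomial A) ^ n - C a3})) := by
  set g1 := (X : Polynomial A) ^ n - C a1 with hg1
  set g2 := (X : Polynomial A) ^ n - C a2 with hg2
  set g3 := (X : Polynomial A) ^ n - C a3 with hg3
  have e0 : (Polynomial A ⧸ Ideal.span {(X : Polynomial A) ^ N - C d}) ≃+*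
      Polynomial A ⧸ (Ideal.span {g1} * Ideal.span {g2 * g3}) :=
    Ideal.quotEquivOfEq (by
      rw [Ideal.span_singleton_mul_span_singleton, ← mul_assoc, ← hfac])
  have e1 : (Polynomial A ⧸ (Ideal.span {g1} * Ideal.span {g2 * g3})) ≃+*
      (Polynomial A ⧸ Ideal.span {g1}) × (Polynomial A ⧸ Ideal.span {g2 * g3}) :=
    Ideal.quotientMulEquivQuotientProd _ _
      ((Ideal.isCoprime_span_singleton_iff _ _).mpr (cop12.mul_right cop13))
  have e2 : (Polynomial A ⧸ Ideal.span {g2 * g3}) ≃+*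
      (Polynomial A ⧸ Ideal.span {g2}) × (Polynomial A ⧸ Ideal.span {g3}) :=
    (Ideal.quotEquivOfEq (Ideal.span_singleton_mul_span_singleton g2 g3).symm).trans
      (Ideal.quotientMulEquivQuotientProd _ _
        ((Ideal.isCoprime_span_singleton_iff _ _).mpr cop23))
  exact ⟨e0.trans (e1.trans (RingEquiv.prodCongr (RingEquiv.refl _) e2))⟩

set_option maxHeartbeats 1000000 in
/-- Let `p` be a prime with `gcd(3,p) = 1` and `p^m ≡ 1 (mod 3)`, and let
`δ ∈ R^t` be a unit that is a cube, say `δ = δ̃³`.  Then `δ̃` is a unit, and there exist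
distinct `b, c ∈ 𝔽_{p^m} \ {0,1}` with
`x^{3p^s} − δ = (x^{p^s} − δ̃)(x^{p^s} − bδ̃)(x^{p^s} − cδ̃)` and
`R^{t,3}_δ ≅ R^t[x]/⟨x^{p^s} − δ̃⟩ × R^t[x]/⟨x^{p^s} − bδ̃⟩ × R^t[x]/⟨x^{p^s} − cδ̃⟩`. -/
theorem stmt_16 (p m s t : ℕ) [Fact p.Prime] (hp : p ≠ 3) (hm : m ≠ 0) (ht : 1 ≤ t)
    (hmod : p ^ m % 3 = 1)
    (δt : Rt p m t) (hδ : IsUnit (δt ^ 3)) :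
    IsUnit δt ∧
    ∃ b c : GaloisField p m, b ≠ c ∧ b ≠ 0 ∧ b ≠ 1 ∧ c ≠ 0 ∧ c ≠ 1 ∧
      (X : Polynomial (Rt p m t)) ^ (3 * p ^ s) - C (δt ^ 3) =
        (X ^ p ^ s - C δt) * (X ^ p ^ s - C (κ p m t b * δt)) *
          (X ^ p ^ s - C (κ p m t c * δt)) ∧
      Nonempty (Qr p m t (3 * p ^ s) (δt ^ 3) ≃+*
        Qr p m t (p ^ s) δt ×
        Qr p m t (p ^ s) (κ p m t b * δt) ×
        Qr p m t (p ^ s) (κ p m t c * δt)) := by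
  -- δ̃ is a unit
  have hδu : IsUnit δt := by
    have h := hδ
    rw [show (3 : ℕ) = 2 + 1 by rfl, pow_succ] at h
    exact isUnit_of_mul_isUnit_right h
  refine ⟨hδu, ?_⟩
  -- find a primitive cube root of unity ω in 𝔽_{p^m}
  haveI : Fintype (GaloisField p m) := Fintype.ofFinite _
  haveI : DecidableEq (GaloisField p m) := Classical.decEq _
  have hc : Fintype.card (GaloisField p m) = p ^ m := by
    rw [← Nat.card_eq_fintype_card]; exact GaloisField.card p m hm
  obtain ⟨ω, hω3, hω1⟩ := exists_cube_root_unity (p ^ m) (GaloisField p m) hc hmod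
  have hω0 : ω ≠ 0 := by
    intro h; rw [h] at hω3; simp at hω3
  refine ⟨ω, ω ^ 2, ?_, hω0, hω1, pow_ne_zero 2 hω0, ?_, ?_⟩
  · -- ω ≠ ω²
    intro h
    apply hω1
    have : ω * 1 = ω * ω := by rw [mul_one]; nth_rewrite 1 [h]; ring
    exact (mul_left_cancel₀ hω0 this).symm
  · -- ω² ≠ 1
    intro h
    apply hω1
    calc ω = ω ^ 3 * ω := by rw[hω3]; ring
      _ = ω ^ 2 * ω ^ 2 := by ring
      _ = 1 := by rw [h]; ring
  · -- set up notation
    have hsum : (1 : GaloisField p m) + ω + ω ^ 2 = 0 := by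
      have hfac : (ω - 1) * (ω ^ 2 + ω + 1) = 0 := by linear_combination hω3
      rcases mul_eq_zero.mp hfac with h | h
      · exact absurd (sub_eq_zero.mp h) hω1
      · linear_combination h
    have hprod : ω * ω ^ 2 = 1 := by linear_combination hω3
    set B := κ p m t ω with hB
    set Cc := κ p m t (ω ^ 2) with hCc
    have h1R : (1 : Rt p m t) + B + Cc = 0 := by
      rw [hB, hCc, ← map_one (κ p m t), ← map_add, ← map_add, hsum, map_zero]
    have h2R : B * Cc = 1 := by rw [hB, hCc, ← map_mul, hprod, map_one]
    -- the factorization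
    have h1' : (1 : Polynomial (Rt p m t)) + C B + C Cc = 0 := by
      rw [← C_1, ← C_add, ← C_add, h1R, C_0]
    have h2' : (C B) * (C Cc) = (1 : Polynomial (Rt p m t)) := by
      rw [← C_mul, h2R, C_1]
    have hfac : (X : Polynomial (Rt p m t)) ^ (3 * p ^ s) - C (δt ^ 3) =
        (X ^ p ^ s - C δt) * (X ^ p ^ s - C (B * δt)) * (X ^ p ^ s - C (Cc * δt)) := by
      have h := cube_factor ((X : Polynomial (Rt p m t)) ^ p ^ s) (C δt) (C B) (C Cc) h1' h2'
      rw [show 3 * p ^ s = p ^ s * 3 from mul_comm _ _, pow_mul, C_pow, h, C_mul, C_mul]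
    refine ⟨hfac, ?_⟩
    -- units needed for coprimality
    have κunit : ∀ x : GaloisField p m, x ≠ 0 → IsUnit (κ p m t x) :=
      fun x hx => (κ p m t).isUnit_map hx.isUnit
    have u12 : IsUnit (B * δt - δt) := by
      have : B * δt - δt = κ p m t (ω - 1) * δt := by rw [map_sub, map_one, hB]; ring
      rw [this]
      exact (κunit _ (sub_ne_zero.mpr hω1)).mul hδu
    have u13 : IsUnit (Cc * δt - δt) := by
      have hc1 : ω ^ 2 ≠ 1 := by
        intro h
        apply hω1
        calc ω = ω ^ 3 * ω := by rw [hω3]; ring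
          _ = ω ^ 2 * ω ^ 2 := by ring
          _ = 1 := by rw [h]; ring
      have : Cc * δt - δt = κ p m t (ω ^ 2 - 1) * δt := by rw [map_sub, map_one, hCc]; ring
      rw [this]
      exact (κunit _ (sub_ne_zero.mpr hc1)).mul hδu
    have u23 : IsUnit (Cc * δt - B * δt) := by
      have hbc : ω ^ 2 ≠ ω := by
        intro h
        exact hω1 (mul_left_cancel₀ hω0 (by rw [mul_one, ← sq]; exact h))
      have : Cc * δt - B * δt = κ p m t (ω ^ 2 - ω) * δt := by
        rw [map_sub, hB, hCc]; ring
      rw [this]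
      exact (κunit _ (sub_ne_zero.mpr hbc)).mul hδu
    -- coprimality of the three factors
    have cop12 : IsCoprime ((X : Polynomial (Rt p m t)) ^ p ^ s - C δt)
        (X ^ p ^ s - C (B * δt)) := coprime_aux _ _ _ u12
    have cop13 : IsCoprime ((X : Polynomial (Rt p m t)) ^ p ^ s - C δt)
        (X ^ p ^ s - C (Cc * δt)) := coprime_aux _ _ _ u13
    have cop23 : IsCoprime ((X : Polynomial (Rt p m t)) ^ p ^ s - C (B * δt))
        (X ^ p ^ s - C (Cc * δt)) := coprime_aux _ _ _ u23
    set g1 := (X : Polynomial (Rt p m t)) ^ p ^ s - C δt with hg1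
    set g2 := (X : Polynomial (Rt p m t)) ^ p ^ s - C (B * δt) with hg2
    set g3 := (X : Polynomial (Rt p m t)) ^ p ^ s - C (Cc * δt) with hg3
    -- chain of ring isomorphisms
    exact crt_three _ _ _ _ _ _ hfac cop12 cop13 cop23
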